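/- arXiv:0902.0685 — 3 statements merged into one kernel-verified Lean document; each statement's English description precedes it below -/
import Mathlib

section
/- Poisson's theorem: if H, f, g : ℝ^{2n} → ℝ are C² functions such that {H, f} = 0 and {H, g} = 0 identically (f and g are first integrals of the Hamiltonian system with Hamiltonian H), then {H, {f, g}} = 0 identically, i.e. the Poisson bracket {f, g} is again a first integral. -/
open Finset

/-- The canonical Poisson bracket of two functions on the phase space
`(Fin n → ℝ) × (Fin n → ℝ)`, whose points are written `z = (q, p)`:
`{f, g}(z) = ∑ k, (∂f/∂p_k · ∂g/∂q_k − ∂f/∂q_k · ∂g/∂p_k)(z)`. -/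
noncomputable def poissonBracket (n : ℕ)
    (f g : (Fin n → ℝ) × (Fin n → ℝ) → ℝ)
    (z : (Fin n → ℝ) × (Fin n → ℝ)) : ℝ :=
  ∑ k : Fin n,
    (fderiv ℝ f z ((0 : Fin n → ℝ), Pi.single k 1) *
        fderiv ℝ g z (Pi.single k 1, (0 : Fin n → ℝ)) -
      fderiv ℝ f z (Pi.single k 1, (0 : Fin n → ℝ)) *
        fderiv ℝ g z ((0 : Fin n → ℝ), Pi.single k 1))

private def Qv (n : ℕ) (k : Fin n) : (Fin n → ℝ) × (Fin n → ℝ) := (Pi.single k 1, 0)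
private def Pv (n : ℕ) (k : Fin n) : (Fin n → ℝ) × (Fin n → ℝ) := (0, Pi.single k 1)

private lemma pb_def {n : ℕ} (f g : (Fin n → ℝ) × (Fin n → ℝ) → ℝ)
    (z : (Fin n → ℝ) × (Fin n → ℝ)) :
    poissonBracket n f g z =
      ∑ k : Fin n, (fderiv ℝ f z (Pv n k) * fderiv ℝ g z (Qv n k) -
        fderiv ℝ f z (Qv n k) * fderiv ℝ g z (Pv n k)) := rfl

private lemma hasFDerivAt_fderiv_apply {n : ℕ}
    {φ : (Fin n → ℝ) × (Fin n → ℝ) → ℝ} (hφ : ContDiff ℝ 2 φ)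
    (z w : (Fin n → ℝ) × (Fin n → ℝ)) :
    HasFDerivAt (fun y => fderiv ℝ φ y w)
      ((fderiv ℝ (fderiv ℝ φ) z).flip w) z := by
  have h1 : HasFDerivAt (fderiv ℝ φ) (fderiv ℝ (fderiv ℝ φ) z) z :=
    (((hφ.fderiv_right (m := 1) (by norm_num)).differentiable (by norm_num)) z).hasFDerivAt
  have h2 := h1.clm_apply (hasFDerivAt_const w z)
  simpa using h2

private lemma pb_hasFDerivAt {n : ℕ}
    {a b : (Fin n → ℝ) × (Fin n → ℝ) → ℝ} (ha : ContDiff ℝ 2 a) (hb : ContDiff ℝ 2 b)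
    (z : (Fin n → ℝ) × (Fin n → ℝ)) :
    HasFDerivAt (poissonBracket n a b)
      (∑ k : Fin n,
        ((fderiv ℝ a z (Pv n k) • ((fderiv ℝ (fderiv ℝ b) z).flip (Qv n k)) +
          fderiv ℝ b z (Qv n k) • ((fderiv ℝ (fderiv ℝ a) z).flip (Pv n k))) -
         (fderiv ℝ a z (Qv n k) • ((fderiv ℝ (fderiv ℝ b) z).flip (Pv n k)) +
          fderiv ℝ b z (Pv n k) • ((fderiv ℝ (fderiv ℝ a) z).flip (Qv n k))))) z := by
  have : (poissonBracket n a b) =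
      fun y => ∑ k : Fin n, (fderiv ℝ a y (Pv n k) * fderiv ℝ b y (Qv n k) -
        fderiv ℝ a y (Qv n k) * fderiv ℝ b y (Pv n k)) := by
    funext y; exact pb_def a b y
  rw [this]
  apply HasFDerivAt.fun_sum
  intro k _
  exact ((hasFDerivAt_fderiv_apply ha z (Pv n k)).mul
      (hasFDerivAt_fderiv_apply hb z (Qv n k))).sub
    ((hasFDerivAt_fderiv_apply ha z (Qv n k)).mul
      (hasFDerivAt_fderiv_apply hb z (Pv n k)))

private lemma pb_fderiv_apply {n : ℕ}
    {a b : (Fin n → ℝ) × (Fin n → ℝ) → ℝ} (ha : ContDiff ℝ 2 a) (hb : ContDiff ℝ 2 b)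
    (z v : (Fin n → ℝ) × (Fin n → ℝ)) :
    fderiv ℝ (poissonBracket n a b) z v =
      ∑ k : Fin n,
        ((fderiv ℝ a z (Pv n k) * fderiv ℝ (fderiv ℝ b) z v (Qv n k) +
          fderiv ℝ b z (Qv n k) * fderiv ℝ (fderiv ℝ a) z v (Pv n k)) -
         (fderiv ℝ a z (Qv n k) * fderiv ℝ (fderiv ℝ b) z v (Pv n k) +
          fderiv ℝ b z (Pv n k) * fderiv ℝ (fderiv ℝ a) z v (Qv n k))) := by
  rw [(pb_hasFDerivAt ha hb z).fderiv]
  simp [ContinuousLinearMap.sum_apply, ContinuousLinearMap.flip_apply, smul_eq_mul]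

/-- **Poisson's theorem.** If `H`, `f`, `g` are `C²` functions on phase space such
that `{H, f} = 0` and `{H, g} = 0` identically (`f` and `g` are first integrals of
the Hamiltonian system with Hamiltonian `H`), then `{H, {f, g}} = 0` identically:
the Poisson bracket `{f, g}` is again a first integral. -/
theorem poisson_theorem (n : ℕ)
    (H f g : (Fin n → ℝ) × (Fin n → ℝ) → ℝ)
    (hH : ContDiff ℝ 2 H) (hf : ContDiff ℝ 2 f) (hg : ContDiff ℝ 2 g)
    (hHf : ∀ z, poissonBracket n H f z = 0)
    (hHg : ∀ z, poissonBracket n H g z = 0) :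
    ∀ z, poissonBracket n H (poissonBracket n f g) z = 0 := by
  intro z
  -- notation
  set DH := fderiv ℝ H z with hDH
  set Df := fderiv ℝ f z with hDf
  set Dg := fderiv ℝ g z with hDg
  set BH := fderiv ℝ (fderiv ℝ H) z with hBH
  set Bf := fderiv ℝ (fderiv ℝ f) z with hBf
  set Bg := fderiv ℝ (fderiv ℝ g) z with hBg
  -- symmetry of second derivatives
  have sH : ∀ v w, BH v w = BH w v := fun v w =>
    (hH.contDiffAt.isSymmSndFDerivAt (by norm_num)) v w
  have sf : ∀ v w, Bf v w = Bf w v := fun v w =>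
    (hf.contDiffAt.isSymmSndFDerivAt (by norm_num)) v w
  have sg : ∀ v w, Bg v w = Bg w v := fun v w =>
    (hg.contDiffAt.isSymmSndFDerivAt (by norm_num)) v w
  -- differentiated constraints
  have key : ∀ (φ : (Fin n → ℝ) × (Fin n → ℝ) → ℝ), ContDiff ℝ 2 φ →
      (∀ y, poissonBracket n H φ y = 0) → ∀ v : (Fin n → ℝ) × (Fin n → ℝ),
      ∑ j : Fin n,
        ((DH (Pv n j) * fderiv ℝ (fderiv ℝ φ) z v (Qv n j) +
          fderiv ℝ φ z (Qv n j) * BH v (Pv n j)) -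
         (DH (Qv n j) * fderiv ℝ (fderiv ℝ φ) z v (Pv n j) +
          fderiv ℝ φ z (Pv n j) * BH v (Qv n j))) = 0 := by
    intro φ hφ hzero v
    have h0 : poissonBracket n H φ = fun _ => (0 : ℝ) := funext hzero
    have h1 : fderiv ℝ (poissonBracket n H φ) z = 0 := by
      rw [h0]; exact fderiv_const_apply 0
    have h2 := pb_fderiv_apply hH hφ z v
    rw [h1] at h2
    simpa using h2.symm
  have Cf := key f hf hHf
  have Cg := key g hg hHg
  -- rewrite constraints into usable form:
  -- ∑ j (DH Pj * Bφ v Qj - DH Qj * Bφ v Pj) = ∑ j (Dφ Pj * BH v Qj - Dφ Qj * BH v Pj)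
  have Wf : ∀ v, ∑ j : Fin n, (DH (Pv n j) * Bf v (Qv n j) - DH (Qv n j) * Bf v (Pv n j)) =
      ∑ j : Fin n, (Df (Pv n j) * BH v (Qv n j) - Df (Qv n j) * BH v (Pv n j)) := by
    intro v
    have h := Cf v
    have : (∑ j : Fin n, (DH (Pv n j) * Bf v (Qv n j) - DH (Qv n j) * Bf v (Pv n j))) -
        (∑ j : Fin n, (Df (Pv n j) * BH v (Qv n j) - Df (Qv n j) * BH v (Pv n j))) = 0 := by
      rw [← Finset.sum_sub_distrib]
      rw [← h]
      apply Finset.sum_congr rfl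
      intro j _
      ring
    linarith
  have Wg : ∀ v, ∑ j : Fin n, (DH (Pv n j) * Bg v (Qv n j) - DH (Qv n j) * Bg v (Pv n j)) =
      ∑ j : Fin n, (Dg (Pv n j) * BH v (Qv n j) - Dg (Qv n j) * BH v (Pv n j)) := by
    intro v
    have h := Cg v
    have : (∑ j : Fin n, (DH (Pv n j) * Bg v (Qv n j) - DH (Qv n j) * Bg v (Pv n j))) -
        (∑ j : Fin n, (Dg (Pv n j) * BH v (Qv n j) - Dg (Qv n j) * BH v (Pv n j))) = 0 := by
      rw [← Finset.sum_sub_distrib]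
      rw [← h]
      apply Finset.sum_congr rfl
      intro j _
      ring
    linarith
  -- the goal
  rw [pb_def]
  have expand : ∀ v, fderiv ℝ (poissonBracket n f g) z v =
      ∑ k : Fin n,
        ((Df (Pv n k) * Bg v (Qv n k) + Dg (Qv n k) * Bf v (Pv n k)) -
         (Df (Qv n k) * Bg v (Pv n k) + Dg (Pv n k) * Bf v (Qv n k))) := by
    intro v
    exact pb_fderiv_apply hf hg z v
  have goal_eq : ∑ j : Fin n,
      (fderiv ℝ H z (Pv n j) * fderiv ℝ (poissonBracket n f g) z (Qv n j) -
       fderiv ℝ H z (Qv n j) * fderiv ℝ (poissonBracket n f g) z (Pv n j)) =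
      ∑ j : Fin n, ∑ k : Fin n,
        (DH (Pv n j) * ((Df (Pv n k) * Bg (Qv n j) (Qv n k) + Dg (Qv n k) * Bf (Qv n j) (Pv n k)) -
           (Df (Qv n k) * Bg (Qv n j) (Pv n k) + Dg (Pv n k) * Bf (Qv n j) (Qv n k))) -
         DH (Qv n j) * ((Df (Pv n k) * Bg (Pv n j) (Qv n k) + Dg (Qv n k) * Bf (Pv n j) (Pv n k)) -
           (Df (Qv n k) * Bg (Pv n j) (Pv n k) + Dg (Pv n k) * Bf (Pv n j) (Qv n k)))) := by
    apply Finset.sum_congr rfl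
    intro j _
    rw [expand (Qv n j), expand (Pv n j), Finset.mul_sum, Finset.mul_sum,
      ← Finset.sum_sub_distrib]
  rw [goal_eq]
  -- swap and regroup
  rw [Finset.sum_comm]
  -- now ∑ k ∑ j; rewrite the inner sum using symmetry to match W-form
  have step : ∀ k : Fin n, ∑ j : Fin n,
      (DH (Pv n j) * ((Df (Pv n k) * Bg (Qv n j) (Qv n k) + Dg (Qv n k) * Bf (Qv n j) (Pv n k)) -
         (Df (Qv n k) * Bg (Qv n j) (Pv n k) + Dg (Pv n k) * Bf (Qv n j) (Qv n k))) -
       DH (Qv n j) * ((Df (Pv n k) * Bg (Pv n j) (Qv n k) + Dg (Qv n k) * Bf (Pv n j) (Pv n k)) -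
         (Df (Qv n k) * Bg (Pv n j) (Pv n k) + Dg (Pv n k) * Bf (Pv n j) (Qv n k)))) =
      Dg (Qv n k) * (∑ j : Fin n, (Df (Pv n j) * BH (Pv n k) (Qv n j) - Df (Qv n j) * BH (Pv n k) (Pv n j)))
      - Dg (Pv n k) * (∑ j : Fin n, (Df (Pv n j) * BH (Qv n k) (Qv n j) - Df (Qv n j) * BH (Qv n k) (Pv n j)))
      + Df (Pv n k) * (∑ j : Fin n, (Dg (Pv n j) * BH (Qv n k) (Qv n j) - Dg (Qv n j) * BH (Qv n k) (Pv n j)))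
      - Df (Qv n k) * (∑ j : Fin n, (Dg (Pv n j) * BH (Pv n k) (Qv n j) - Dg (Qv n j) * BH (Pv n k) (Pv n j))) := by
    intro k
    rw [← Wf (Pv n k), ← Wf (Qv n k), ← Wg (Qv n k), ← Wg (Pv n k)]
    rw [Finset.mul_sum, Finset.mul_sum, Finset.mul_sum, Finset.mul_sum,
      ← Finset.sum_sub_distrib, ← Finset.sum_add_distrib, ← Finset.sum_sub_distrib]
    apply Finset.sum_congr rfl
    intro j _
    linear_combination
      (DH (Pv n j) * Dg (Qv n k)) * sf (Qv n j) (Pv n k) -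
      (DH (Pv n j) * Dg (Pv n k)) * sf (Qv n j) (Qv n k) -
      (DH (Qv n j) * Dg (Qv n k)) * sf (Pv n j) (Pv n k) +
      (DH (Qv n j) * Dg (Pv n k)) * sf (Pv n j) (Qv n k) +
      (DH (Pv n j) * Df (Pv n k)) * sg (Qv n j) (Qv n k) -
      (DH (Pv n j) * Df (Qv n k)) * sg (Qv n j) (Pv n k) -
      (DH (Qv n j) * Df (Pv n k)) * sg (Pv n j) (Qv n k) +
      (DH (Qv n j) * Df (Qv n k)) * sg (Pv n j) (Pv n k)
  rw [Finset.sum_congr rfl (fun k _ => step k)]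
  -- final antisymmetric cancellation
  set s : Fin n → Fin n → ℝ := fun k j =>
    Dg (Qv n k) * (Df (Pv n j) * BH (Pv n k) (Qv n j) - Df (Qv n j) * BH (Pv n k) (Pv n j))
    - Dg (Pv n k) * (Df (Pv n j) * BH (Qv n k) (Qv n j) - Df (Qv n j) * BH (Qv n k) (Pv n j))
    + Df (Pv n k) * (Dg (Pv n j) * BH (Qv n k) (Qv n j) - Dg (Qv n j) * BH (Qv n k) (Pv n j))
    - Df (Qv n k) * (Dg (Pv n j) * BH (Pv n k) (Qv n j) - Dg (Qv n j) * BH (Pv n k) (Pv n j))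
    with hs
  have sum_form : ∑ k : Fin n,
      (Dg (Qv n k) * (∑ j : Fin n, (Df (Pv n j) * BH (Pv n k) (Qv n j) - Df (Qv n j) * BH (Pv n k) (Pv n j)))
      - Dg (Pv n k) * (∑ j : Fin n, (Df (Pv n j) * BH (Qv n k) (Qv n j) - Df (Qv n j) * BH (Qv n k) (Pv n j)))
      + Df (Pv n k) * (∑ j : Fin n, (Dg (Pv n j) * BH (Qv n k) (Qv n j) - Dg (Qv n j) * BH (Qv n k) (Pv n j)))
      - Df (Qv n k) * (∑ j : Fin n, (Dg (Pv n j) * BH (Pv n k) (Qv n j) - Dg (Qv n j) * BH (Pv n k) (Pv n j)))) =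
      ∑ k : Fin n, ∑ j : Fin n, s k j := by
    apply Finset.sum_congr rfl
    intro k _
    rw [Finset.mul_sum, Finset.mul_sum, Finset.mul_sum, Finset.mul_sum,
      ← Finset.sum_sub_distrib, ← Finset.sum_add_distrib, ← Finset.sum_sub_distrib]
  rw [sum_form]
  have anti : ∀ k j, s k j + s j k = 0 := by
    intro k j
    simp only [hs]
    linear_combination
      (Dg (Qv n k) * Df (Pv n j) - Df (Qv n k) * Dg (Pv n j)) * sH (Pv n k) (Qv n j) +
      (Df (Qv n k) * Dg (Qv n j) - Dg (Qv n k) * Df (Qv n j)) * sH (Pv n k) (Pv n j) +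
      (Df (Pv n k) * Dg (Pv n j) - Dg (Pv n k) * Df (Pv n j)) * sH (Qv n k) (Qv n j) +
      (Dg (Pv n k) * Df (Qv n j) - Df (Pv n k) * Dg (Qv n j)) * sH (Qv n k) (Pv n j)
  have hswap : ∑ k : Fin n, ∑ j : Fin n, s k j = ∑ k : Fin n, ∑ j : Fin n, s j k :=
    Finset.sum_comm
  have hdouble : (∑ k : Fin n, ∑ j : Fin n, s k j) + (∑ k : Fin n, ∑ j : Fin n, s k j) = 0 := by
    nth_rewrite 2 [hswap]
    rw [← Finset.sum_add_distrib]
    exact Finset.sum_eq_zero fun k _ => by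
      rw [← Finset.sum_add_distrib]
      exact Finset.sum_eq_zero fun j _ => anti k j
  linarith
end

section
/- Lagrange's invariance theorem (the canonical symplectic form is invariant under Hamiltonian flows): let H : ℝ × ℝ^{2n} → ℝ be C² and let Φ : ℝ × ℝ^{2n} → ℝ^{2n} be a C² map satisfying ∂Φ/∂t(t, a) = J ∇_z H(t, Φ(t, a)) for all (t, a), and Φ(t₀, a) = a for all a at some initial time t₀. Then for every (t, a) the spatial Jacobian matrix D_aΦ(t, a) is symplectic, i.e. (D_aΦ)ᵀ J (D_aΦ) = J. Equivalently, the Lagrange parentheses of the flow do not depend on time. -/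
open Matrix

/-- The standard `2n × 2n` real symplectic matrix `J = [[0, Iₙ], [−Iₙ, 0]]`,
with the indexing set `Fin n ⊕ Fin n` for `{1, …, 2n}`. -/
def symplecticJ (n : ℕ) : Matrix (Fin n ⊕ Fin n) (Fin n ⊕ Fin n) ℝ :=
  Matrix.fromBlocks 0 1 (-1) 0

/-- The spatial Jacobian matrix `D_aΦ(t, a)` of a time-dependent map
`Φ : ℝ → ℝ²ⁿ → ℝ²ⁿ`: its `(i, j)` entry is `∂Φ_i/∂a_j (t, a)`. -/
noncomputable def spatialJacobian (n : ℕ)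
    (Φ : ℝ → ((Fin n ⊕ Fin n) → ℝ) → (Fin n ⊕ Fin n) → ℝ)
    (t : ℝ) (a : (Fin n ⊕ Fin n) → ℝ) : Matrix (Fin n ⊕ Fin n) (Fin n ⊕ Fin n) ℝ :=
  Matrix.of fun i j => fderiv ℝ (fun b => Φ t b i) a (Pi.single j 1)

section auxiliary

variable {E F : Type*} [NormedAddCommGroup E] [NormedSpace ℝ E]
  [NormedAddCommGroup F] [NormedSpace ℝ F]

lemma LagrangeAux.fderiv_slice {f : ℝ × E → F} {t : ℝ} {a : E}
    (hf : DifferentiableAt ℝ f (t, a)) (v : E) :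
    fderiv ℝ (fun b => f (t, b)) a v = fderiv ℝ f (t, a) ((0 : ℝ), v) := by
  have h := hf.hasFDerivAt.comp a (hasFDerivAt_prodMk_right t a)
  rw [show (fun b => f (t, b)) = f ∘ Prod.mk t from rfl, h.fderiv]; rfl

lemma LagrangeAux.hasDerivAt_slice {f : ℝ × E → F} {t : ℝ} {a : E}
    (hf : DifferentiableAt ℝ f (t, a)) :
    HasDerivAt (fun s => f (s, a)) (fderiv ℝ f (t, a) ((1 : ℝ), (0 : E))) t :=
  hf.hasFDerivAt.comp_hasDerivAt t ((hasDerivAt_id t).prodMk (hasDerivAt_const t a))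

end auxiliary

open LagrangeAux in
/-- The main analytic step: the time derivative of an entry of the spatial Jacobian. -/
lemma LagrangeAux.key_deriv {ι : Type*} [Fintype ι] [DecidableEq ι] (J : Matrix ι ι ℝ)
    (H : ℝ × (ι → ℝ) → ℝ)
    (Φ : ℝ → (ι → ℝ) → ι → ℝ)
    (hH : ContDiff ℝ 2 H)
    (hΦ : ContDiff ℝ 2 (fun p : ℝ × (ι → ℝ) => Φ p.1 p.2))
    (hflow : ∀ (t : ℝ) (a : ι → ℝ) (i : ι),
      HasDerivAt (fun s => Φ s a i)
        (∑ j : ι, J i j *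
          fderiv ℝ (fun w => H (t, w)) (Φ t a) (Pi.single j 1)) t)
    (t : ℝ) (a : ι → ℝ) (i j : ι) :
    HasDerivAt (fun s => fderiv ℝ (fun b => Φ s b i) a (Pi.single j 1))
      (∑ k, J i k *
        fderiv ℝ (fderiv ℝ (fun w => H (t, w))) (Φ t a)
          (fderiv ℝ (fun b => Φ t b) a (Pi.single j 1)) (Pi.single k 1)) t := by
  have hf : ContDiff ℝ 2 (fun p : ℝ × (ι → ℝ) => Φ p.1 p.2 i) := contDiff_pi.mp hΦ i
  have hf1 : Differentiable ℝ (fun p : ℝ × (ι → ℝ) => Φ p.1 p.2 i) := hf.differentiable two_ne_zero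
  have hfd : ContDiff ℝ 1 (fderiv ℝ (fun p : ℝ × (ι → ℝ) => Φ p.1 p.2 i)) :=
    hf.fderiv_right (by norm_num)
  have hfd1 : Differentiable ℝ (fderiv ℝ (fun p : ℝ × (ι → ℝ) => Φ p.1 p.2 i)) :=
    hfd.differentiable one_ne_zero
  have hfun : (fun s => fderiv ℝ (fun b => Φ s b i) a (Pi.single j 1))
      = fun s => fderiv ℝ (fun p : ℝ × (ι → ℝ) => Φ p.1 p.2 i) (s, a)
          ((0 : ℝ), (Pi.single j 1 : ι → ℝ)) := by
    funext s; exact fderiv_slice (hf1 (s, a)) _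
  rw [hfun]
  have h2 : HasFDerivAt (fderiv ℝ (fun p : ℝ × (ι → ℝ) => Φ p.1 p.2 i))
      (fderiv ℝ (fderiv ℝ (fun p : ℝ × (ι → ℝ) => Φ p.1 p.2 i)) (t, a)) (t, a) :=
    (hfd1 _).hasFDerivAt
  have h3 : HasDerivAt (fun s => fderiv ℝ (fun p : ℝ × (ι → ℝ) => Φ p.1 p.2 i) (s, a))
      (fderiv ℝ (fderiv ℝ (fun p : ℝ × (ι → ℝ) => Φ p.1 p.2 i)) (t, a)
        ((1 : ℝ), (0 : ι → ℝ))) t :=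
    h2.comp_hasDerivAt t ((hasDerivAt_id t).prodMk (hasDerivAt_const t a))
  have h4 : HasDerivAt
      (fun s => fderiv ℝ (fun p : ℝ × (ι → ℝ) => Φ p.1 p.2 i) (s, a)
        ((0 : ℝ), (Pi.single j 1 : ι → ℝ)))
      (fderiv ℝ (fderiv ℝ (fun p : ℝ × (ι → ℝ) => Φ p.1 p.2 i)) (t, a)
        ((1 : ℝ), (0 : ι → ℝ)) ((0 : ℝ), (Pi.single j 1 : ι → ℝ))) t := by
    have := h3.clm_apply (hasDerivAt_const t ((0 : ℝ), (Pi.single j 1 : ι → ℝ)))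
    simpa using this
  have hsymm := (hf.contDiffAt (x := (t, a))).isSymmSndFDerivAt (by simp)
  have h5 : fderiv ℝ (fderiv ℝ (fun p : ℝ × (ι → ℝ) => Φ p.1 p.2 i)) (t, a)
        ((1 : ℝ), (0 : ι → ℝ)) ((0 : ℝ), (Pi.single j 1 : ι → ℝ))
      = fderiv ℝ (fderiv ℝ (fun p : ℝ × (ι → ℝ) => Φ p.1 p.2 i)) (t, a)
        ((0 : ℝ), (Pi.single j 1 : ι → ℝ)) ((1 : ℝ), (0 : ι → ℝ)) :=
    hsymm _ _
  have h6 := h2.clm_apply (hasFDerivAt_const ((1 : ℝ), (0 : ι → ℝ)) ((t, a) : ℝ × (ι → ℝ)))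
  have h7 : fderiv ℝ (fderiv ℝ (fun p : ℝ × (ι → ℝ) => Φ p.1 p.2 i)) (t, a)
        ((0 : ℝ), (Pi.single j 1 : ι → ℝ)) ((1 : ℝ), (0 : ι → ℝ))
      = fderiv ℝ (fun p : ℝ × (ι → ℝ) =>
          fderiv ℝ (fun q : ℝ × (ι → ℝ) => Φ q.1 q.2 i) p ((1 : ℝ), (0 : ι → ℝ))) (t, a)
          ((0 : ℝ), (Pi.single j 1 : ι → ℝ)) := by
    rw [h6.fderiv]; simp
  have hψdiff : DifferentiableAt ℝ (fun p : ℝ × (ι → ℝ) =>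
      fderiv ℝ (fun q : ℝ × (ι → ℝ) => Φ q.1 q.2 i) p ((1 : ℝ), (0 : ι → ℝ))) (t, a) :=
    (hfd1 (t, a)).clm_apply (differentiableAt_const _)
  have h8 : fderiv ℝ (fun p : ℝ × (ι → ℝ) =>
        fderiv ℝ (fun q : ℝ × (ι → ℝ) => Φ q.1 q.2 i) p ((1 : ℝ), (0 : ι → ℝ))) (t, a)
        ((0 : ℝ), (Pi.single j 1 : ι → ℝ))
      = fderiv ℝ (fun b => fderiv ℝ (fun q : ℝ × (ι → ℝ) => Φ q.1 q.2 i) (t, b)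
          ((1 : ℝ), (0 : ι → ℝ))) a (Pi.single j 1) :=
    (fderiv_slice hψdiff _).symm
  have h9 : ∀ (b : ι → ℝ), fderiv ℝ (fun q : ℝ × (ι → ℝ) => Φ q.1 q.2 i) (t, b)
        ((1 : ℝ), (0 : ι → ℝ))
      = ∑ k, J i k * fderiv ℝ (fun w => H (t, w)) (Φ t b) (Pi.single k 1) := fun b =>
    (hasDerivAt_slice (hf1 (t, b))).unique (hflow t b i)
  have h10 : (fun b => fderiv ℝ (fun q : ℝ × (ι → ℝ) => Φ q.1 q.2 i) (t, b)
        ((1 : ℝ), (0 : ι → ℝ)))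
      = fun b => ∑ k, J i k *
          fderiv ℝ (fun w => H (t, w)) (Φ t b) (Pi.single k 1) := funext h9
  have hHt : ContDiff ℝ 2 (fun w : ι → ℝ => H (t, w)) :=
    hH.comp (contDiff_const.prodMk contDiff_id)
  have hG : Differentiable ℝ (fderiv ℝ (fun w : ι → ℝ => H (t, w))) :=
    (hHt.fderiv_right (by norm_num)).differentiable one_ne_zero
  have hΦt : DifferentiableAt ℝ (fun b : ι → ℝ => Φ t b) a := by
    have : DifferentiableAt ℝ ((fun p : ℝ × (ι → ℝ) => Φ p.1 p.2) ∘ (fun b : ι → ℝ => (t, b))) a :=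
      ((hΦ.differentiable two_ne_zero) (t, a)).comp a
        ((differentiableAt_const t).prodMk differentiableAt_id)
    exact this
  have hcomp : HasFDerivAt (fun b => fderiv ℝ (fun w : ι → ℝ => H (t, w)) (Φ t b))
      ((fderiv ℝ (fderiv ℝ (fun w : ι → ℝ => H (t, w))) (Φ t a)).comp
        (fderiv ℝ (fun b : ι → ℝ => Φ t b) a)) a :=
    (hG (Φ t a)).hasFDerivAt.comp a hΦt.hasFDerivAt
  have h11 : HasFDerivAt
      (fun b => ∑ k, J i k *
        fderiv ℝ (fun w => H (t, w)) (Φ t b) (Pi.single k 1))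
      (∑ k, J i k •
        (((fderiv ℝ (fderiv ℝ (fun w : ι → ℝ => H (t, w))) (Φ t a)).comp
          (fderiv ℝ (fun b : ι → ℝ => Φ t b) a)).flip (Pi.single k 1))) a := by
    apply HasFDerivAt.fun_sum
    intro k _
    have hk := hcomp.clm_apply (hasFDerivAt_const (Pi.single k 1 : ι → ℝ) a)
    have := hk.const_mul (J i k)
    simpa using this
  have hfin : fderiv ℝ (fun b => ∑ k, J i k *
        fderiv ℝ (fun w => H (t, w)) (Φ t b) (Pi.single k 1)) a (Pi.single j 1)
      = ∑ k, J i k *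
        fderiv ℝ (fderiv ℝ (fun w => H (t, w))) (Φ t a)
          (fderiv ℝ (fun b => Φ t b) a (Pi.single j 1)) (Pi.single k 1) := by
    rw [h11.fderiv]
    simp [smul_eq_mul]
  rw [show (∑ k, J i k *
        fderiv ℝ (fderiv ℝ (fun w => H (t, w))) (Φ t a)
          (fderiv ℝ (fun b => Φ t b) a (Pi.single j 1)) (Pi.single k 1))
      = fderiv ℝ (fderiv ℝ (fun p : ℝ × (ι → ℝ) => Φ p.1 p.2 i)) (t, a)
        ((1 : ℝ), (0 : ι → ℝ)) ((0 : ℝ), (Pi.single j 1 : ι → ℝ)) from by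
    rw [h5, h7, h8, h10, hfin]]
  exact h4

lemma LagrangeAux.clm_expand {ι : Type*} [Fintype ι] [DecidableEq ι]
    (B : (ι → ℝ) →L[ℝ] ℝ) (w : ι → ℝ) :
    B w = ∑ k, w k * B (Pi.single k 1) := by
  have hw : w = ∑ k, w k • (Pi.single k 1 : ι → ℝ) := by
    ext l
    simp [Finset.sum_apply, Pi.single_apply]
  conv_lhs => rw [hw]
  rw [map_sum]
  simp

open LagrangeAux in
lemma LagrangeAux.alg_zero {ι : Type*} [Fintype ι] [DecidableEq ι] (J : Matrix ι ι ℝ)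
    (hJJ : ∀ i k, ∑ i', J i i' * J i' k = -(if i = k then 1 else 0))
    (hJTJ : ∀ k i', ∑ i, J i k * J i i' = (if k = i' then 1 else 0))
    (B : (ι → ℝ) →L[ℝ] (ι → ℝ) →L[ℝ] ℝ) (hB : ∀ u w, B u w = B w u)
    (u w : ι → ℝ) :
    ∑ i', ((∑ i, (∑ k, J i k * B u (Pi.single k 1)) * J i i') * w i'
       + (∑ i, u i * J i i') * (∑ k, J i' k * B w (Pi.single k 1))) = 0 := by
  have T1 : ∀ i', (∑ i, (∑ k, J i k * B u (Pi.single k 1)) * J i i')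
      = B u (Pi.single i' 1) := by
    intro i'
    calc ∑ i, (∑ k, J i k * B u (Pi.single k 1)) * J i i'
        = ∑ i, ∑ k, (J i k * J i i') * B u (Pi.single k 1) := by
          refine Finset.sum_congr rfl fun i _ => ?_
          rw [Finset.sum_mul]
          exact Finset.sum_congr rfl fun k _ => by ring
      _ = ∑ k, ∑ i, (J i k * J i i') * B u (Pi.single k 1) := Finset.sum_comm
      _ = ∑ k, (∑ i, J i k * J i i') * B u (Pi.single k 1) := by
          simp [Finset.sum_mul]
      _ = B u (Pi.single i' 1) := by
          simp [hJTJ, ite_mul]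
  have T2 : ∑ i', (∑ i, u i * J i i') * (∑ k, J i' k * B w (Pi.single k 1))
      = -B w u := by
    calc ∑ i', (∑ i, u i * J i i') * (∑ k, J i' k * B w (Pi.single k 1))
        = ∑ i', ∑ k, ∑ i, (u i * (J i i' * J i' k)) * B w (Pi.single k 1) := by
          refine Finset.sum_congr rfl fun i' _ => ?_
          rw [Finset.mul_sum]
          refine Finset.sum_congr rfl fun k _ => ?_
          rw [Finset.sum_mul]
          exact Finset.sum_congr rfl fun i _ => by ring
      _ = ∑ k, ∑ i, (∑ i', (J i i' * J i' k)) * (u i * B w (Pi.single k 1)) := by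
          rw [Finset.sum_comm]
          refine Finset.sum_congr rfl fun k _ => ?_
          rw [Finset.sum_comm]
          refine Finset.sum_congr rfl fun i _ => ?_
          rw [Finset.sum_mul]
          exact Finset.sum_congr rfl fun i' _ => by ring
      _ = ∑ k, -(u k * B w (Pi.single k 1)) := by
          refine Finset.sum_congr rfl fun k _ => ?_
          rw [Finset.sum_eq_single k]
          · simp [hJJ]
          · intro i _ hik
            simp [hJJ, hik]
          · simp
      _ = -B w u := by
          rw [Finset.sum_neg_distrib, clm_expand (B w) u]
  calc ∑ i', ((∑ i, (∑ k, J i k * B u (Pi.single k 1)) * J i i') * w i'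
       + (∑ i, u i * J i i') * (∑ k, J i' k * B w (Pi.single k 1)))
      = (∑ i', B u (Pi.single i' 1) * w i')
        + ∑ i', (∑ i, u i * J i i') * (∑ k, J i' k * B w (Pi.single k 1)) := by
        rw [Finset.sum_add_distrib]
        congr 1
        exact Finset.sum_congr rfl fun i' _ => by rw [T1]
    _ = B u w + -B w u := by
        rw [T2]
        congr 1
        rw [clm_expand (B u) w]
        exact Finset.sum_congr rfl fun i' _ => by ring
    _ = 0 := by rw [hB u w]; ring


lemma LagrangeAux.symplecticJ_mul_self (n : ℕ) : symplecticJ n * symplecticJ n = -1 := by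
  have : (-1 : Matrix (Fin n ⊕ Fin n) (Fin n ⊕ Fin n) ℝ) = Matrix.fromBlocks (-1) 0 0 (-1) := by
    rw [← Matrix.fromBlocks_one, Matrix.fromBlocks_neg]
    simp
  rw [this]
  simp [symplecticJ, Matrix.fromBlocks_multiply]

lemma LagrangeAux.symplecticJ_transpose_mul_self (n : ℕ) :
    (symplecticJ n)ᵀ * symplecticJ n = 1 := by
  rw [← Matrix.fromBlocks_one]
  simp [symplecticJ, Matrix.fromBlocks_transpose, Matrix.fromBlocks_multiply]

lemma LagrangeAux.symplecticJ_entry_mul (n : ℕ) (i k : Fin n ⊕ Fin n) :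
    ∑ i', symplecticJ n i i' * symplecticJ n i' k = -(if i = k then 1 else 0) := by
  have := congrFun (congrFun (LagrangeAux.symplecticJ_mul_self n) i) k
  rw [Matrix.mul_apply] at this
  rw [this]
  simp [Matrix.one_apply]

lemma LagrangeAux.symplecticJ_entry_tmul (n : ℕ) (k i' : Fin n ⊕ Fin n) :
    ∑ i, symplecticJ n i k * symplecticJ n i i' = (if k = i' then 1 else 0) := by
  have := congrFun (congrFun (LagrangeAux.symplecticJ_transpose_mul_self n) k) i'
  rw [Matrix.mul_apply] at this
  simp only [Matrix.transpose_apply] at this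
  rw [this]
  simp [Matrix.one_apply]


/-- **Lagrange's invariance theorem** (the canonical symplectic form is invariant
under Hamiltonian flows).  Let `H : ℝ × ℝ²ⁿ → ℝ` be `C²` and let
`Φ : ℝ × ℝ²ⁿ → ℝ²ⁿ` be a `C²` map satisfying `∂Φ/∂t(t, a) = J ∇_z H(t, Φ(t, a))`
for all `(t, a)` (componentwise: `∂Φ_i/∂t = ∑ j, J i j ∂H/∂z_j`), with
`Φ(t₀, a) = a` for all `a` at some initial time `t₀`.  Then for every `(t, a)`
the spatial Jacobian matrix `D_aΦ(t, a)` is symplectic: `(D_aΦ)ᵀ J (D_aΦ) = J`.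
Equivalently, the Lagrange parentheses of the flow do not depend on time. -/
theorem lagrange_invariance_of_symplectic_form (n : ℕ)
    (H : ℝ × ((Fin n ⊕ Fin n) → ℝ) → ℝ)
    (Φ : ℝ → ((Fin n ⊕ Fin n) → ℝ) → (Fin n ⊕ Fin n) → ℝ)
    (hH : ContDiff ℝ 2 H)
    (hΦ : ContDiff ℝ 2 (fun p : ℝ × ((Fin n ⊕ Fin n) → ℝ) => Φ p.1 p.2))
    (hflow : ∀ (t : ℝ) (a : (Fin n ⊕ Fin n) → ℝ) (i : Fin n ⊕ Fin n),
      HasDerivAt (fun s => Φ s a i)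
        (∑ j : Fin n ⊕ Fin n, symplecticJ n i j *
          fderiv ℝ (fun w => H (t, w)) (Φ t a) (Pi.single j 1)) t)
    (t₀ : ℝ) (hinit : ∀ a, Φ t₀ a = a) :
    ∀ (t : ℝ) (a : (Fin n ⊕ Fin n) → ℝ),
      (spatialJacobian n Φ t a)ᵀ * symplecticJ n * spatialJacobian n Φ t a
        = symplecticJ n := by
  intro t a
  -- component relation between pi-valued and scalar fderivs
  have hΦdiff : ∀ (s : ℝ), DifferentiableAt ℝ (fun b : (Fin n ⊕ Fin n) → ℝ => Φ s b) a := by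
    intro s
    have : DifferentiableAt ℝ ((fun p : ℝ × ((Fin n ⊕ Fin n) → ℝ) => Φ p.1 p.2) ∘ (fun b : (Fin n ⊕ Fin n) → ℝ => (s, b))) a :=
      ((hΦ.differentiable two_ne_zero) (s, a)).comp a
        ((differentiableAt_const s).prodMk differentiableAt_id)
    exact this
  have hm : ∀ (s : ℝ) (i j : (Fin n ⊕ Fin n)), fderiv ℝ (fun b => Φ s b i) a (Pi.single j 1)
      = fderiv ℝ (fun b : (Fin n ⊕ Fin n) → ℝ => Φ s b) a (Pi.single j 1) i := by
    intro s i j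
    have h := (hasFDerivAt_pi'.mp (hΦdiff s).hasFDerivAt) i
    rw [h.fderiv]
    rfl
  -- the entry function and its zero derivative
  have hzero : ∀ (j j' : (Fin n ⊕ Fin n)) (s : ℝ),
      HasDerivAt (fun s' => ∑ i' : (Fin n ⊕ Fin n), (∑ i : (Fin n ⊕ Fin n),
          fderiv ℝ (fun b => Φ s' b i) a (Pi.single j 1) * symplecticJ n i i') *
          fderiv ℝ (fun b => Φ s' b i') a (Pi.single j' 1)) 0 s := by
    intro j j' s
    have key := LagrangeAux.key_deriv (symplecticJ n) H Φ hH hΦ hflow s a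
    have hd : HasDerivAt (fun s' => ∑ i' : (Fin n ⊕ Fin n), (∑ i : (Fin n ⊕ Fin n),
          fderiv ℝ (fun b => Φ s' b i) a (Pi.single j 1) * symplecticJ n i i') *
          fderiv ℝ (fun b => Φ s' b i') a (Pi.single j' 1))
        (∑ i' : (Fin n ⊕ Fin n),
          ((∑ i : (Fin n ⊕ Fin n), (∑ k, symplecticJ n i k *
              fderiv ℝ (fderiv ℝ (fun w => H (s, w))) (Φ s a)
                (fderiv ℝ (fun b => Φ s b) a (Pi.single j 1)) (Pi.single k 1)) *
              symplecticJ n i i') *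
            fderiv ℝ (fun b => Φ s b i') a (Pi.single j' 1)
          + (∑ i : (Fin n ⊕ Fin n), fderiv ℝ (fun b => Φ s b i) a (Pi.single j 1) * symplecticJ n i i') *
            (∑ k, symplecticJ n i' k *
              fderiv ℝ (fderiv ℝ (fun w => H (s, w))) (Φ s a)
                (fderiv ℝ (fun b => Φ s b) a (Pi.single j' 1)) (Pi.single k 1)))) s := by
      apply HasDerivAt.fun_sum
      intro i' _
      exact (HasDerivAt.fun_sum fun i _ => (key i j).mul_const (symplecticJ n i i')).mul (key i' j')
    have hval : (∑ i' : (Fin n ⊕ Fin n),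
          ((∑ i : (Fin n ⊕ Fin n), (∑ k, symplecticJ n i k *
              fderiv ℝ (fderiv ℝ (fun w => H (s, w))) (Φ s a)
                (fderiv ℝ (fun b => Φ s b) a (Pi.single j 1)) (Pi.single k 1)) *
              symplecticJ n i i') *
            fderiv ℝ (fun b => Φ s b i') a (Pi.single j' 1)
          + (∑ i : (Fin n ⊕ Fin n), fderiv ℝ (fun b => Φ s b i) a (Pi.single j 1) * symplecticJ n i i') *
            (∑ k, symplecticJ n i' k *
              fderiv ℝ (fderiv ℝ (fun w => H (s, w))) (Φ s a)
                (fderiv ℝ (fun b => Φ s b) a (Pi.single j' 1)) (Pi.single k 1)))) = 0 := by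
      simp only [hm]
      have hHs : ContDiff ℝ 2 (fun w : (Fin n ⊕ Fin n) → ℝ => H (s, w)) :=
        hH.comp (contDiff_const.prodMk contDiff_id)
      exact LagrangeAux.alg_zero (symplecticJ n)
        (LagrangeAux.symplecticJ_entry_mul n) (LagrangeAux.symplecticJ_entry_tmul n)
        (fderiv ℝ (fderiv ℝ (fun w : (Fin n ⊕ Fin n) → ℝ => H (s, w))) (Φ s a))
        (fun u w => ((hHs.contDiffAt (x := Φ s a)).isSymmSndFDerivAt (by simp)) u w)
        (fderiv ℝ (fun b : (Fin n ⊕ Fin n) → ℝ => Φ s b) a (Pi.single j 1))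
        (fderiv ℝ (fun b : (Fin n ⊕ Fin n) → ℝ => Φ s b) a (Pi.single j' 1))
    rw [hval] at hd
    exact hd
  -- constancy of the entry function
  have hconst : ∀ (j j' : (Fin n ⊕ Fin n)),
      (∑ i' : (Fin n ⊕ Fin n), (∑ i : (Fin n ⊕ Fin n),
          fderiv ℝ (fun b => Φ t b i) a (Pi.single j 1) * symplecticJ n i i') *
          fderiv ℝ (fun b => Φ t b i') a (Pi.single j' 1))
      = (∑ i' : (Fin n ⊕ Fin n), (∑ i : (Fin n ⊕ Fin n),
          fderiv ℝ (fun b => Φ t₀ b i) a (Pi.single j 1) * symplecticJ n i i') *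
          fderiv ℝ (fun b => Φ t₀ b i') a (Pi.single j' 1)) := by
    intro j j'
    have := is_const_of_deriv_eq_zero (f := fun s' => ∑ i' : (Fin n ⊕ Fin n), (∑ i : (Fin n ⊕ Fin n),
          fderiv ℝ (fun b => Φ s' b i) a (Pi.single j 1) * symplecticJ n i i') *
          fderiv ℝ (fun b => Φ s' b i') a (Pi.single j' 1))
      (fun s => (hzero j j' s).differentiableAt)
      (fun s => (hzero j j' s).deriv) t t₀
    exact this
  -- initial value
  have hinitval : ∀ (i j : (Fin n ⊕ Fin n)), fderiv ℝ (fun b => Φ t₀ b i) a (Pi.single j 1)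
      = if i = j then 1 else 0 := by
    intro i j
    have h1 : (fun b : (Fin n ⊕ Fin n) → ℝ => Φ t₀ b i) = fun b => b i := by
      funext b; rw [hinit b]
    rw [h1]
    have : fderiv ℝ (fun b : (Fin n ⊕ Fin n) → ℝ => b i) a
        = (ContinuousLinearMap.proj i : (((Fin n ⊕ Fin n) → ℝ)) →L[ℝ] ℝ) :=
      (ContinuousLinearMap.proj i : (((Fin n ⊕ Fin n) → ℝ)) →L[ℝ] ℝ).fderiv
    rw [this]
    simp [Pi.single_apply]
  -- conclude
  ext j j'
  have hentry : ((spatialJacobian n Φ t a)ᵀ * symplecticJ n * spatialJacobian n Φ t a) j j'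
      = ∑ i' : (Fin n ⊕ Fin n), (∑ i : (Fin n ⊕ Fin n),
          fderiv ℝ (fun b => Φ t b i) a (Pi.single j 1) * symplecticJ n i i') *
          fderiv ℝ (fun b => Φ t b i') a (Pi.single j' 1) := by
    simp [Matrix.mul_apply, spatialJacobian]
  rw [hentry, hconst j j']
  simp only [hinitval]
  simp [Finset.sum_ite_eq, ite_mul, mul_ite]
end

section
/- Conservation of the eccentricity vector (Hermann): if x : I → ℝ³ is a C² curve with x(t) ≠ 0 for all t ∈ I satisfying x''(t) = −μ x(t)/‖x(t)‖³, then the eccentricity vector t ↦ (1/μ) x'(t) × (x(t) × x'(t)) − x(t)/‖x(t)‖ is constant on I. -/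
/-- The cross product on Euclidean three-dimensional space `EuclideanSpace ℝ (Fin 3)`. -/
noncomputable def cross (a b : EuclideanSpace ℝ (Fin 3)) : EuclideanSpace ℝ (Fin 3) :=
  (EuclideanSpace.equiv (Fin 3) ℝ).symm
    ![a 1 * b 2 - a 2 * b 1, a 2 * b 0 - a 0 * b 2, a 0 * b 1 - a 1 * b 0]

section Aux

local notation "⟪" x ", " y "⟫" => inner (𝕜 := ℝ) x y

lemma crossApply (a b : EuclideanSpace ℝ (Fin 3)) (i : Fin 3) :
    cross a b i = ![a 1 * b 2 - a 2 * b 1, a 2 * b 0 - a 0 * b 2, a 0 * b 1 - a 1 * b 0] i := rfl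

lemma cle_symm_apply (v : Fin 3 → ℝ) (i : Fin 3) :
    (PiLp.continuousLinearEquiv 2 ℝ (fun _ : Fin 3 => ℝ)).symm v i = v i := rfl

lemma eucl_add_apply (a b : EuclideanSpace ℝ (Fin 3)) (i : Fin 3) : (a + b) i = a i + b i := rfl
lemma eucl_sub_apply (a b : EuclideanSpace ℝ (Fin 3)) (i : Fin 3) : (a - b) i = a i - b i := rfl
lemma eucl_smul_apply (c : ℝ) (a : EuclideanSpace ℝ (Fin 3)) (i : Fin 3) :
    (c • a) i = c * a i := rfl
lemma eucl_zero_apply (i : Fin 3) : (0 : EuclideanSpace ℝ (Fin 3)) i = 0 := rfl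

lemma eucl_inner_eq (a b : EuclideanSpace ℝ (Fin 3)) :
    ⟪a, b⟫ = a 0 * b 0 + a 1 * b 1 + a 2 * b 2 := by
  simp [PiLp.inner_apply, RCLike.inner_apply, Fin.sum_univ_three, mul_comm]

lemma cross_self' (a : EuclideanSpace ℝ (Fin 3)) : cross a a = 0 := by
  ext i
  fin_cases i <;> simp [crossApply, eucl_zero_apply] <;> ring

lemma cross_smul_left' (c : ℝ) (a b : EuclideanSpace ℝ (Fin 3)) :
    cross (c • a) b = c • cross a b := by
  ext i
  fin_cases i <;> simp [crossApply, eucl_smul_apply] <;> ring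

lemma cross_smul_right' (c : ℝ) (a b : EuclideanSpace ℝ (Fin 3)) :
    cross a (c • b) = c • cross a b := by
  ext i
  fin_cases i <;> simp [crossApply, eucl_smul_apply] <;> ring

lemma cross_zero_right' (a : EuclideanSpace ℝ (Fin 3)) : cross a 0 = 0 := by
  ext i
  fin_cases i <;> simp [crossApply, eucl_zero_apply]

lemma cross_triple (a b c : EuclideanSpace ℝ (Fin 3)) :
    cross a (cross b c) = ⟪a, c⟫ • b - ⟪a, b⟫ • c := by
  ext i
  fin_cases i <;>
    simp [crossApply, eucl_sub_apply, eucl_smul_apply, eucl_inner_eq, Fin.sum_univ_three] <;> ring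

lemma coord_deriv {f : ℝ → EuclideanSpace ℝ (Fin 3)} {f' : EuclideanSpace ℝ (Fin 3)}
    {s : Set ℝ} {t : ℝ} (hf : HasDerivWithinAt f f' s t) (i : Fin 3) :
    HasDerivWithinAt (fun u => f u i) (f' i) s t := by
  exact
    (EuclideanSpace.proj (𝕜 := ℝ) i).hasFDerivAt.comp_hasDerivWithinAt t hf

lemma hasDerivWithinAt_cross {f g : ℝ → EuclideanSpace ℝ (Fin 3)}
    {f' g' : EuclideanSpace ℝ (Fin 3)} {s : Set ℝ} {t : ℝ}
    (hf : HasDerivWithinAt f f' s t) (hg : HasDerivWithinAt g g' s t) :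
    HasDerivWithinAt (fun u => cross (f u) (g u)) (cross f' (g t) + cross (f t) g') s t := by
  have h0 : ∀ i : Fin 3, HasDerivWithinAt (fun u => f u i) (f' i) s t := coord_deriv hf
  have h1 : ∀ i : Fin 3, HasDerivWithinAt (fun u => g u i) (g' i) s t := coord_deriv hg
  have key : HasDerivWithinAt (fun u => (fun i => ![f u 1 * g u 2 - f u 2 * g u 1,
      f u 2 * g u 0 - f u 0 * g u 2, f u 0 * g u 1 - f u 1 * g u 0] i : Fin 3 → ℝ))
      (fun i => ![f' 1 * g t 2 + f t 1 * g' 2 - (f' 2 * g t 1 + f t 2 * g' 1),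
        f' 2 * g t 0 + f t 2 * g' 0 - (f' 0 * g t 2 + f t 0 * g' 2),
        f' 0 * g t 1 + f t 0 * g' 1 - (f' 1 * g t 0 + f t 1 * g' 0)] i) s t := by
    rw [hasDerivWithinAt_pi]
    intro i
    fin_cases i <;> simp <;>
      exact (((h0 _).mul (h1 _)).sub ((h0 _).mul (h1 _)))
  have H := ((PiLp.continuousLinearEquiv 2 ℝ
    (fun _ : Fin 3 => ℝ)).symm.toContinuousLinearMap.hasFDerivAt).comp_hasDerivWithinAt t key
  refine H.congr_deriv ?_
  ext i
  fin_cases i <;>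
    simp [eucl_add_apply, crossApply, cle_symm_apply] <;> ring

end Aux

/-- **Conservation of the eccentricity vector (Hermann).** If `x : I → ℝ³` is a
`C²` curve (with velocity `v = x'`) which avoids the origin and satisfies
`x''(t) = −μ x(t)/‖x(t)‖³` for the Kepler problem (`μ > 0`, attractive center at
the origin), then the eccentricity vector
`t ↦ (1/μ) x'(t) × (x(t) × x'(t)) − x(t)/‖x(t)‖` is constant on the interval `I`. -/
theorem eccentricity_vector_constant
    (μ : ℝ) (hμ : 0 < μ) (I : Set ℝ) (hI : I.OrdConnected)
    (x v : ℝ → EuclideanSpace ℝ (Fin 3))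
    (hx0 : ∀ t ∈ I, x t ≠ 0)
    (hx : ∀ t ∈ I, HasDerivWithinAt x (v t) I t)
    (hv : ∀ t ∈ I, HasDerivWithinAt v (-(μ / ‖x t‖ ^ 3) • x t) I t) :
    ∀ t₁ ∈ I, ∀ t₂ ∈ I,
      (1 / μ) • cross (v t₁) (cross (x t₁) (v t₁)) - (‖x t₁‖)⁻¹ • x t₁ =
      (1 / μ) • cross (v t₂) (cross (x t₂) (v t₂)) - (‖x t₂‖)⁻¹ • x t₂ := by
  set e : ℝ → EuclideanSpace ℝ (Fin 3) :=
    fun t => (1 / μ) • cross (v t) (cross (x t) (v t)) - (‖x t‖)⁻¹ • x t with he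
  have hderiv : ∀ t ∈ I, HasDerivWithinAt e 0 I t := by
    intro t ht
    have hr : ‖x t‖ ≠ 0 := norm_ne_zero_iff.mpr (hx0 t ht)
    set a : EuclideanSpace ℝ (Fin 3) := -(μ / ‖x t‖ ^ 3) • x t with ha
    -- derivative of the first term
    have hc1 := hasDerivWithinAt_cross (hx t ht) (hv t ht)
    have houter := hasDerivWithinAt_cross (hv t ht) hc1
    have hterm1 := houter.const_smul (1 / μ)
    -- derivative of ⟪x, x⟫
    have hq := (hx t ht).inner ℝ (hx t ht)
    -- derivative of ‖x ·‖
    have hq0 : (inner ℝ (x t) (x t) : ℝ) ≠ 0 := by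
      rw [real_inner_self_eq_norm_sq]
      positivity
    have hsq := hq.sqrt hq0
    have hfun : (fun u => Real.sqrt (inner ℝ (x u) (x u) : ℝ)) = fun u => ‖x u‖ := by
      funext u
      rw [real_inner_self_eq_norm_sq, Real.sqrt_sq (norm_nonneg _)]
    rw [hfun] at hsq
    have hsqval : Real.sqrt (inner ℝ (x t) (x t) : ℝ) = ‖x t‖ := by
      rw [real_inner_self_eq_norm_sq, Real.sqrt_sq (norm_nonneg _)]
    rw [hsqval] at hsq
    -- derivative of (‖x ·‖)⁻¹
    have hinv := hsq.inv hr
    -- derivative of the second term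
    have hterm2 := hinv.smul (hx t ht)
    have hE := hterm1.sub hterm2
    have hzero : (1 / μ) • (cross a (cross (x t) (v t)) +
          cross (v t) (cross (v t) (v t) + cross (x t) a)) -
        ((‖x t‖)⁻¹ • v t +
          (-(((inner ℝ (x t) (v t) : ℝ) + (inner ℝ (v t) (x t) : ℝ)) / (2 * ‖x t‖)) / ‖x t‖ ^ 2) •
            x t) = 0 := by
      simp only [ha, cross_self', cross_smul_right', cross_smul_left', cross_triple,
        smul_zero, zero_add, add_zero, cross_zero_right', real_inner_smul_left]
      rw [real_inner_self_eq_norm_sq, real_inner_comm (v t) (x t)]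
      set s : ℝ := (inner ℝ (x t) (v t) : ℝ)
      set r : ℝ := ‖x t‖
      match_scalars <;> field_simp <;> ring
    simp only [Pi.inv_apply] at hE
    rw [hzero] at hE
    exact hE
  have hconv : Convex ℝ I := convex_iff_ordConnected.mpr hI
  intro t₁ h₁ t₂ h₂
  have := hconv.norm_image_sub_le_of_norm_hasDerivWithin_le (f := e) (f' := fun _ => 0) (C := 0)
    hderiv (fun u hu => by simp) h₂ h₁
  have h0 : ‖e t₁ - e t₂‖ ≤ 0 := by simpa using this
  have : e t₁ = e t₂ := by
    have := norm_sub_eq_zero_iff.mp (le_antisymm h0 (norm_nonneg _))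
    exact this
  simpa [he] using this
end
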